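/- arXiv:2108.04299 — 4 statements merged into one kernel-verified Lean document; each statement's English description precedes it below -/
import Mathlib

section
/- The graph of the boundary of the (d+1)-dimensional cross-polytope is strictly balanced with essential density d: it has 2(d+1) vertices and 2d(d+1) edges, so its edge-to-vertex ratio is d, and every proper subgraph on at least one vertex has edge-to-vertex ratio strictly less than d. -/
/-- The 1-skeleton of the boundary of the `(d+1)`-dimensional cross-polytope:
the complete `(d+1)`-partite graph with all parts of size 2. -/
def crossGraph (d : ℕ) : SimpleGraph (Fin (d + 1) × Fin 2) where
  Adj u v := u.1 ≠ v.1
  symm := ⟨fun _ _ h => Ne.symm h⟩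
  loopless := ⟨fun _ h => h rfl⟩


instance (d : ℕ) : DecidableRel (crossGraph d).Adj :=
  fun u v => inferInstanceAs (Decidable (u.1 ≠ v.1))

lemma crossGraph_degree (d : ℕ) (v : Fin (d + 1) × Fin 2) :
    (crossGraph d).degree v = 2 * d := by
  rw [← SimpleGraph.card_neighborSet_eq_degree]
  have : (crossGraph d).neighborSet v ≃ {i : Fin (d+1) // i ≠ v.1} × Fin 2 :=
    { toFun := fun w => (⟨w.1.1, fun h => w.2 (h.symm)⟩, w.1.2)
      invFun := fun p => ⟨(p.1.1, p.2), fun h => p.1.2 h.symm⟩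
      left_inv := fun w => by ext <;> rfl
      right_inv := fun p => by ext <;> rfl }
  rw [Fintype.card_congr this]
  simp [Fintype.card_subtype_compl, mul_comm]

lemma crossGraph_card_edges (d : ℕ) :
    (crossGraph d).edgeFinset.card = 2 * d * (d + 1) := by
  have h := SimpleGraph.sum_degrees_eq_twice_card_edges (crossGraph d)
  simp only [crossGraph_degree, Finset.sum_const, smul_eq_mul, Finset.card_univ,
    Fintype.card_prod, Fintype.card_fin] at h
  ring_nf at h ⊢
  omega


lemma degree_congr {V : Type*} (G : SimpleGraph V) (v : V)
    (i1 i2 : Fintype (G.neighborSet v)) :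
    @SimpleGraph.degree _ G v i1 = @SimpleGraph.degree _ G v i2 := by
  rw [← @SimpleGraph.card_neighborSet_eq_degree _ _ _ i1,
    ← @SimpleGraph.card_neighborSet_eq_degree _ _ _ i2]
  exact @Fintype.card_congr _ _ i1 i2 (Equiv.refl _)

open SimpleGraph Finset in
lemma key (d : ℕ) (hd : 1 ≤ d) (H : (crossGraph d).Subgraph) (hH : H ≠ ⊤)
    (hne : H.verts.Nonempty) :
    Nat.card ↥H.edgeSet < d * Nat.card ↥H.verts := by
  classical
  haveI : Fintype ↥H.verts := Fintype.ofFinite _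
  haveI : DecidableRel H.coe.Adj := Classical.decRel _
  haveI : DecidableEq ↥H.verts := Classical.decEq _
  have hsum := SimpleGraph.sum_degrees_eq_twice_card_edges H.coe
  rw [SimpleGraph.edgeFinset_card, ← Nat.card_eq_fintype_card] at hsum
  have hsum' : ∑ v, H.coe.degree v = 2 * Nat.card ↥H.coe.edgeSet := by
    rw [← hsum]
    exact Finset.sum_congr rfl (fun v _ => degree_congr _ _ _ _)
  clear hsum
  have hE : Nat.card ↥H.edgeSet = Nat.card ↥H.coe.edgeSet := by
    have hinj : Function.Injective (Sym2.map ((↑) : H.verts → Fin (d+1) × Fin 2)) :=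
      Sym2.map.injective Subtype.coe_injective
    rw [← SimpleGraph.Subgraph.image_coe_edgeSet_coe, Nat.card_coe_set_eq,
      Set.ncard_image_of_injective _ hinj, Nat.card_coe_set_eq]
  set n := Fintype.card ↥H.verts with hn
  have hnV : Nat.card ↥H.verts = n := Nat.card_eq_fintype_card
  have hn1 : 1 ≤ n := Fintype.card_pos_iff.mpr hne.to_subtype
  obtain ⟨m, hm⟩ : ∃ m, n = m + 1 := ⟨n - 1, by omega⟩
  -- general degree bound
  have hdegG : ∀ v : ↥H.verts, H.coe.degree v ≤ 2 * d := by
    intro v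
    haveI : Fintype ↥(H.neighborSet ↑v) := Fintype.ofFinite _
    rw [Subgraph.coe_degree]
    calc H.degree ↑v ≤ (crossGraph d).degree ↑v := H.degree_le _
    _ = 2 * d := crossGraph_degree d _
  rw [hE, hnV]
  rcases le_or_gt n (2 * d) with hle | hgt
  · -- small vertex set
    have h1 : ∀ v : ↥H.verts, H.coe.degree v ≤ n - 1 := fun v => by
      have h := H.coe.degree_lt_card_verts v
      rw [degree_congr _ _ _ (H.coe.neighborSetFintype v)]
      omega
    have h2 : ∑ v, H.coe.degree v ≤ n * (n - 1) := by
      calc ∑ v, H.coe.degree v ≤ (Finset.univ.card) * (n - 1) :=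
            Finset.sum_le_card_nsmul _ _ _ (fun v _ => h1 v)
      _ = n * (n - 1) := by rw [Finset.card_univ]
    have hlt : 2 * Nat.card ↥H.coe.edgeSet < 2 * (d * n) := by
      calc 2 * Nat.card ↥H.coe.edgeSet = ∑ v, H.coe.degree v := hsum'.symm
      _ ≤ n * (n - 1) := h2
      _ = (m + 1) * m := by rw [hm, Nat.add_sub_cancel]
      _ < (m + 1) * (2 * d) := (Nat.mul_lt_mul_left (Nat.succ_pos m)).mpr (by omega)
      _ = 2 * (d * n) := by rw [hm]; ring
    omega
  · -- find a vertex x in verts with a G-neighbor u such that u ∉ H.neighborSet x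
    have hx : ∃ x : ↥H.verts, ∃ u, (crossGraph d).Adj ↑x u ∧ u ∉ H.neighborSet ↑x := by
      by_cases hv : H.verts = Set.univ
      · have hnall : ¬ ∀ a b, (crossGraph d).Adj a b → H.Adj a b := by
          intro hall
          apply hH
          ext a b
          · simp [hv, Subgraph.verts_top]
          · simp only [Subgraph.top_adj]
            exact ⟨fun h => H.adj_sub h, fun h => hall a b h⟩
        push_neg at hnall
        obtain ⟨a, b, hab, hnadj⟩ := hnall
        exact ⟨⟨a, hv ▸ Set.mem_univ a⟩, b, hab, fun h => hnadj h⟩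
      · obtain ⟨u, hu⟩ : ∃ u, u ∉ H.verts := by
          by_contra h
          push_neg at h
          exact hv (Set.eq_univ_of_forall h)
        have h3 : ∃ x ∈ H.verts, x.1 ≠ u.1 := by
          by_contra hcon
          push_neg at hcon
          have hsub : H.verts ⊆ {w : Fin (d+1) × Fin 2 | w.1 = u.1} := fun w hw => hcon w hw
          have hc2 : Nat.card {w : Fin (d+1) × Fin 2 | w.1 = u.1} = 2 := by
            rw [Nat.card_congr
              (⟨fun w => w.1.2, fun j => ⟨(u.1, j), rfl⟩,
                fun w => Subtype.ext (Prod.ext w.2.symm rfl),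
                fun j => rfl⟩ : {w : Fin (d+1) × Fin 2 | w.1 = u.1} ≃ Fin 2)]
            simp
          have hle2 : n ≤ 2 := by
            calc n = H.verts.ncard := by rw [← hnV, Nat.card_coe_set_eq]
            _ ≤ ({w : Fin (d+1) × Fin 2 | w.1 = u.1}).ncard :=
                  Set.ncard_le_ncard hsub (Set.toFinite _)
            _ = 2 := by rw [← Nat.card_coe_set_eq, hc2]
          omega
        obtain ⟨x, hxv, hx1⟩ := h3
        exact ⟨⟨x, hxv⟩, u, hx1, fun h => hu (H.neighborSet_subset_verts _ h)⟩
    obtain ⟨x, u, hadj, hnb⟩ := hx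
    -- degree of x is at most 2d - 1
    have hdx : H.coe.degree x ≤ 2 * d - 1 := by
      haveI : Fintype ↥(H.neighborSet ↑x) := Fintype.ofFinite _
      rw [Subgraph.coe_degree, ← Subgraph.finset_card_neighborSet_eq_degree]
      have hsub : (H.neighborSet ↑x).toFinset ⊆ ((crossGraph d).neighborFinset ↑x).erase u := by
        intro w hw
        rw [Set.mem_toFinset] at hw
        refine Finset.mem_erase.mpr ⟨fun h => hnb (h ▸ hw), ?_⟩
        rw [SimpleGraph.mem_neighborFinset]
        exact H.adj_sub hw
      calc (H.neighborSet ↑x).toFinset.card ≤ _ := Finset.card_le_card hsub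
      _ = ((crossGraph d).neighborFinset ↑x).card - 1 :=
            Finset.card_erase_of_mem (by rw [SimpleGraph.mem_neighborFinset]; exact hadj)
      _ = 2 * d - 1 := by rw [SimpleGraph.card_neighborFinset_eq_degree, crossGraph_degree]
    have hsplit : H.coe.degree x + ∑ v ∈ Finset.univ.erase x, H.coe.degree v
        = ∑ v, H.coe.degree v := by
      exact Finset.add_sum_erase Finset.univ (fun v => H.coe.degree v) (Finset.mem_univ x)
    have hrest : ∑ v ∈ Finset.univ.erase x, H.coe.degree v ≤ m * (2 * d) := by
      calc _ ≤ (Finset.univ.erase x).card * (2 * d) :=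
            Finset.sum_le_card_nsmul _ _ _ (fun v _ => hdegG v)
      _ = m * (2 * d) := by
            rw [Finset.card_erase_of_mem (Finset.mem_univ x), Finset.card_univ, ← hn,
              hm, Nat.add_sub_cancel]
    have h5 : m * (2 * d) + 2 * d = 2 * (d * n) := by rw [hm]; ring
    omega


/-- the graph of the boundary of the `(d+1)`-cross-polytope is strictly
balanced with essential density `d`: it has `2(d+1)` vertices and `2d(d+1)` edges, so its
edge-to-vertex ratio is `d`, and every proper subgraph with at least one vertex has
edge-to-vertex ratio strictly less than `d`. -/
theorem stmt2 (d : ℕ) (hd : 1 ≤ d) :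
    Nat.card (Fin (d + 1) × Fin 2) = 2 * (d + 1) ∧
    Nat.card (crossGraph d).edgeSet = 2 * d * (d + 1) ∧
    (Nat.card (crossGraph d).edgeSet : ℚ) / (Nat.card (Fin (d + 1) × Fin 2) : ℚ) = d ∧
    ∀ H : (crossGraph d).Subgraph, H ≠ ⊤ → H.verts.Nonempty →
      (Nat.card H.edgeSet : ℚ) / (Nat.card H.verts : ℚ) < d := by
  have h1 : Nat.card (Fin (d + 1) × Fin 2) = 2 * (d + 1) := by
    simp [Nat.card_eq_fintype_card]
    ring
  have h2 : Nat.card (crossGraph d).edgeSet = 2 * d * (d + 1) := by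
    rw [Nat.card_eq_fintype_card, ← SimpleGraph.edgeFinset_card, crossGraph_card_edges]
  refine ⟨h1, h2, ?_, ?_⟩
  · rw [h1, h2]
    have : ((d : ℚ) + 1) ≠ 0 := by positivity
    push_cast
    field_simp
  · intro H hH hne
    have hkey := key d hd H hH hne
    have hn0 : 0 < Nat.card ↥H.verts := Nat.card_pos_iff.mpr ⟨hne.to_subtype, Set.toFinite _⟩
    rw [div_lt_iff₀ (by exact_mod_cast hn0)]
    calc (Nat.card ↥H.edgeSet : ℚ) < (d * Nat.card ↥H.verts : ℕ) := by exact_mod_cast hkey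
    _ = d * Nat.card ↥H.verts := by push_cast; ring
end

section
/- For d ≥ 1, every flag (clique) complex on at most 2d+2 vertices that is not d-collapsible must have every vertex of degree at least 2d in its 1-skeleton. -/
/-- An abstract simplicial complex on vertex type `V`: a family of nonempty
finite sets closed under passing to nonempty subsets. -/
structure AbsComplex (V : Type*) where
  faces : Set (Finset V)
  nonempty_mem : ∀ ⦃σ⦄, σ ∈ faces → σ.Nonempty
  down_closed : ∀ ⦃σ τ : Finset V⦄, σ ∈ faces → τ ⊆ σ → τ.Nonempty → τ ∈ faces

/-- The clique (flag) complex of a graph: faces are the nonempty cliques. -/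
def cliqueComplex {V : Type*} (G : SimpleGraph V) : AbsComplex V where
  faces := {σ | σ.Nonempty ∧ G.IsClique σ}
  nonempty_mem := fun _ h => h.1
  down_closed := fun _ _ h hsub hne => ⟨hne, h.2.subset (Finset.coe_subset.mpr hsub)⟩

/-- `σ` is a free face with unique proper coface `τ`. -/
def IsFreeFace {V : Type*} (X : AbsComplex V) (σ τ : Finset V) : Prop :=
  σ ∈ X.faces ∧ τ ∈ X.faces ∧ σ ⊂ τ ∧ ∀ ρ ∈ X.faces, σ ⊂ ρ → ρ = τ

/-- An elementary collapse: remove a free face together with its unique proper coface. -/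
def CollapseStep {V : Type*} (X Y : AbsComplex V) : Prop :=
  ∃ σ τ, IsFreeFace X σ τ ∧ Y.faces = X.faces \ {σ, τ}

/-- `X` is `d`-collapsible: some sequence of elementary collapses removes all
faces of dimension at least `d` (i.e. of cardinality at least `d + 1`). -/
def Collapsible {V : Type*} (d : ℕ) (X : AbsComplex V) : Prop :=
  ∃ Y : AbsComplex V, Relation.ReflTransGen CollapseStep X Y ∧ ∀ σ ∈ Y.faces, σ.card ≤ d

namespace Stmt3Aux
set_option linter.unusedSectionVars false
set_option linter.unusedVariables false

variable {V : Type*} [DecidableEq V]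

theorem AbsComplex.ext' {X Y : AbsComplex V} (h : X.faces = Y.faces) : X = Y := by
  cases X; cases Y; simpa using h

/-- Collapse steps whose free face has cardinality at least `d`. -/
def CollapseStepGE (d : ℕ) (X Y : AbsComplex V) : Prop :=
  ∃ σ τ, IsFreeFace X σ τ ∧ d ≤ σ.card ∧ Y.faces = X.faces \ {σ, τ}

def CollapsibleGE (d : ℕ) (X : AbsComplex V) : Prop :=
  ∃ Y : AbsComplex V, Relation.ReflTransGen (CollapseStepGE d) X Y ∧ ∀ σ ∈ Y.faces, σ.card ≤ d

theorem collapsible_of_GE {d : ℕ} {X : AbsComplex V} (h : CollapsibleGE d X) :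
    Collapsible d X := by
  rcases h with ⟨Y, h, hb⟩
  exact ⟨Y, Relation.ReflTransGen.mono (r := CollapseStepGE d) (p := CollapseStep) (fun _ _ h => by rcases h with ⟨σ, τ, hf, _, he⟩; exact ⟨σ, τ, hf, he⟩) X Y h, hb⟩

theorem rtg_faces_subset {d : ℕ} {X Y : AbsComplex V}
    (h : Relation.ReflTransGen (CollapseStepGE d) X Y) : Y.faces ⊆ X.faces := by
  induction h with
  | refl => exact subset_rfl
  | tail _ hbc ih =>
      rcases hbc with ⟨σ, τ, _, _, he⟩
      exact (he ▸ Set.diff_subset).trans ih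

/-- The complex of nonempty cliques of `G` contained in `S`. -/
def Kc (G : SimpleGraph V) (S : Finset V) : AbsComplex V where
  faces := {σ | σ.Nonempty ∧ G.IsClique (σ : Set V) ∧ σ ⊆ S}
  nonempty_mem := fun _ h => h.1
  down_closed := fun σ τ h hsub hne =>
    ⟨hne, h.2.1.subset (Finset.coe_subset.mpr hsub), hsub.trans h.2.2⟩

theorem mem_Kc {G : SimpleGraph V} {S : Finset V} {σ : Finset V} :
    σ ∈ (Kc G S).faces ↔ σ.Nonempty ∧ G.IsClique (σ : Set V) ∧ σ ⊆ S := Iff.rfl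

theorem Kc_empty_faces (G : SimpleGraph V) : (Kc G (∅ : Finset V)).faces = ∅ := by
  ext σ
  simp only [mem_Kc, Set.mem_empty_iff_false, iff_false]
  rintro ⟨hne, -, hsub⟩
  rcases hne with ⟨x, hx⟩
  exact absurd (hsub hx) (Finset.notMem_empty x)


/-- Invariants for the glued complex `Xg`. `D` is the current "deletion part"
(faces avoiding `v`), `L` the current "link part". -/
structure Good (G : SimpleGraph V) (S : Finset V) (v : V) (D L : AbsComplex V) : Prop where
  hD : ∀ σ ∈ D.faces, G.IsClique (σ : Set V) ∧ σ ⊆ S.erase v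
  hL : ∀ ρ ∈ L.faces, G.IsClique (ρ : Set V) ∧ ρ ⊆ S.erase v ∧ ∀ u ∈ ρ, G.Adj v u
  hsub : ∀ ρ ∈ L.faces, ∀ τ, τ ⊆ ρ → τ.Nonempty → τ ∈ D.faces

theorem Good.not_mem_v {G : SimpleGraph V} {S : Finset V} {v : V} {D L : AbsComplex V}
    (g : Good G S v D L) {σ : Finset V} (h : σ ∈ D.faces) : v ∉ σ := fun hv =>
  (Finset.mem_erase.mp ((g.hD σ h).2 hv)).1 rfl

theorem Good.not_mem_vL {G : SimpleGraph V} {S : Finset V} {v : V} {D L : AbsComplex V}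
    (g : Good G S v D L) {ρ : Finset V} (h : ρ ∈ L.faces) : v ∉ ρ := fun hv =>
  (Finset.mem_erase.mp ((g.hL ρ h).2.1 hv)).1 rfl

/-- The glued complex: faces avoiding `v` are those of `D`; faces containing `v`
are `{v}` and the cones `insert v ρ` over faces `ρ` of `L`. -/
def Xg (G : SimpleGraph V) (S : Finset V) (v : V) (D L : AbsComplex V)
    (g : Good G S v D L) : AbsComplex V where
  faces := D.faces ∪ {σ | v ∈ σ ∧ (σ = {v} ∨ σ.erase v ∈ L.faces)}
  nonempty_mem := by
    rintro σ (h | ⟨hv, -⟩)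
    · exact D.nonempty_mem h
    · exact ⟨v, hv⟩
  down_closed := by
    rintro σ τ (h | ⟨hv, hc | hc⟩) hsub hne
    · exact Or.inl (D.down_closed h hsub hne)
    · subst hc
      rcases hne with ⟨x, hx⟩
      have : x = v := by simpa using hsub hx
      subst this
      have : τ = {x} := Finset.Subset.antisymm hsub (Finset.singleton_subset_iff.mpr hx)
      exact Or.inr ⟨hx, Or.inl this⟩
    · by_cases hvτ : v ∈ τ
      · by_cases hneτ : (τ.erase v).Nonempty
        · exact Or.inr ⟨hvτ, Or.inr (L.down_closed hc (Finset.erase_subset_erase v hsub) hneτ)⟩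
        · have : τ = {v} := by
            apply Finset.Subset.antisymm _ (Finset.singleton_subset_iff.mpr hvτ)
            intro x hx
            rcases eq_or_ne x v with rfl | hxv
            · simp
            · exact absurd ⟨x, Finset.mem_erase.mpr ⟨hxv, hx⟩⟩ hneτ
          exact Or.inr ⟨hvτ, Or.inl this⟩
      · exact Or.inl (g.hsub _ hc τ (Finset.subset_erase.mpr ⟨hsub, hvτ⟩) hne)

theorem mem_Xg {G : SimpleGraph V} {S : Finset V} {v : V} {D L : AbsComplex V}
    {g : Good G S v D L} {σ : Finset V} :
    σ ∈ (Xg G S v D L g).faces ↔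
      σ ∈ D.faces ∨ (v ∈ σ ∧ (σ = {v} ∨ σ.erase v ∈ L.faces)) := Iff.rfl

/-- Lifting a collapse step of the link part to the glued complex. -/
theorem phase1_step {G : SimpleGraph V} {S : Finset V} {v : V} {D L L₂ : AbsComplex V}
    (c : ℕ) (h : CollapseStepGE c L L₂) (g : Good G S v D L) :
    ∃ g₂ : Good G S v D L₂,
      CollapseStepGE (c + 1) (Xg G S v D L g) (Xg G S v D L₂ g₂) := by
  obtain ⟨σ, τ, ⟨hσ, hτ, hst, huniq⟩, hcard, hfaces⟩ := h
  have hLsub : L₂.faces ⊆ L.faces := by rw [hfaces]; exact Set.diff_subset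
  refine ⟨⟨g.hD, fun ρ hρ => g.hL ρ (hLsub hρ), fun ρ hρ => g.hsub ρ (hLsub hρ)⟩, ?_⟩
  have hvσ : v ∉ σ := g.not_mem_vL hσ
  have hvτ : v ∉ τ := g.not_mem_vL hτ
  have heσ : (insert v σ).erase v = σ := Finset.erase_insert hvσ
  have heτ : (insert v τ).erase v = τ := Finset.erase_insert hvτ
  have hσne : σ.Nonempty := L.nonempty_mem hσ
  have hιv : ∀ ρ : Finset V, v ∈ ρ → insert v (ρ.erase v) = ρ := fun ρ h =>
    Finset.insert_erase h
  refine ⟨insert v σ, insert v τ, ⟨?_, ?_, ?_, ?_⟩, ?_, ?_⟩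
  · exact Or.inr ⟨Finset.mem_insert_self v σ, Or.inr (by rw [heσ]; exact hσ)⟩
  · exact Or.inr ⟨Finset.mem_insert_self v τ, Or.inr (by rw [heτ]; exact hτ)⟩
  · constructor
    · exact Finset.insert_subset_insert v hst.subset
    · intro hcon
      apply hst.2
      intro x hx
      have hxv : x ≠ v := fun he => hvτ (he ▸ hx)
      have := hcon (Finset.mem_insert_of_mem hx)
      exact (Finset.mem_insert.mp this).resolve_left hxv
  · rintro ρ (hρ | ⟨hvρ, hc | hc⟩) hss
    · exact absurd ((g.hD ρ hρ).2 (hss.subset (Finset.mem_insert_self v σ)))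
        (by simp)
    · exfalso
      rcases hσne with ⟨x, hx⟩
      have : x ∈ ρ := hss.subset (Finset.mem_insert_of_mem hx)
      rw [hc] at this
      exact hvσ ((Finset.mem_singleton.mp this) ▸ hx)
    · have hsub2 : σ ⊆ ρ.erase v := by
        intro x hx
        exact Finset.mem_erase.mpr ⟨fun he => hvσ (he ▸ hx),
          hss.subset (Finset.mem_insert_of_mem hx)⟩
      have hne2 : σ ≠ ρ.erase v := by
        intro he
        exact hss.2 (by rw [he, hιv ρ hvρ])
      have := huniq _ hc (Finset.ssubset_iff_subset_ne.mpr ⟨hsub2, hne2⟩)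
      rw [← hιv ρ hvρ, this]
  · rw [Finset.card_insert_of_notMem hvσ]; omega
  · have hτne : τ.Nonempty := L.nonempty_mem hτ
    have hten1 : insert v σ ≠ {v} := by
      rcases hσne with ⟨y, hy⟩
      intro he
      have : y ∈ ({v} : Finset V) := he ▸ Finset.mem_insert_of_mem hy
      exact hvσ ((Finset.mem_singleton.mp this) ▸ hy)
    have hten2 : insert v τ ≠ {v} := by
      rcases hτne with ⟨y, hy⟩
      intro he
      have : y ∈ ({v} : Finset V) := he ▸ Finset.mem_insert_of_mem hy
      exact hvτ ((Finset.mem_singleton.mp this) ▸ hy)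
    ext x
    simp only [mem_Xg, Set.mem_diff, Set.mem_insert_iff, Set.mem_singleton_iff]
    constructor
    · rintro (hx | ⟨hvx, hx | hx⟩)
      · refine ⟨Or.inl hx, ?_⟩
        rintro (rfl | rfl)
        · exact g.not_mem_v hx (Finset.mem_insert_self v σ)
        · exact g.not_mem_v hx (Finset.mem_insert_self v τ)
      · subst hx
        refine ⟨Or.inr ⟨hvx, Or.inl rfl⟩, ?_⟩
        rintro (he | he)
        · exact hten1 he.symm
        · exact hten2 he.symm
      · rw [hfaces] at hx
        obtain ⟨hxL, hne⟩ := hx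
        refine ⟨Or.inr ⟨hvx, Or.inr hxL⟩, ?_⟩
        rintro (rfl | rfl)
        · exact hne (by rw [heσ]; exact Or.inl rfl)
        · exact hne (by rw [heτ]; exact Or.inr rfl)
    · rintro ⟨hx | ⟨hvx, hx | hx⟩, hnot⟩
      · exact Or.inl hx
      · exact Or.inr ⟨hvx, Or.inl hx⟩
      · refine Or.inr ⟨hvx, Or.inr ?_⟩
        rw [hfaces]
        refine ⟨hx, ?_⟩
        rintro (he | he)
        · exact hnot (Or.inl (by rw [← Finset.insert_erase hvx, he]))
        · exact hnot (Or.inr (by rw [← Finset.insert_erase hvx, he]))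


/-- Lifting a collapse step of the deletion part to the glued complex. -/
theorem phase2_step {G : SimpleGraph V} {S : Finset V} {v : V} {D D₂ L : AbsComplex V}
    (c : ℕ) (h : CollapseStepGE (c + 1) D D₂) (g : Good G S v D L)
    (hLc : ∀ ρ ∈ L.faces, ρ.card ≤ c) :
    ∃ g₂ : Good G S v D₂ L,
      CollapseStepGE (c + 1) (Xg G S v D L g) (Xg G S v D₂ L g₂) := by
  obtain ⟨σ, τ, ⟨hσ, hτ, hst, huniq⟩, hcard, hfaces⟩ := h
  have hDsub : D₂.faces ⊆ D.faces := by rw [hfaces]; exact Set.diff_subset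
  have hvσ : v ∉ σ := g.not_mem_v hσ
  have hvτ : v ∉ τ := g.not_mem_v hτ
  have hcards : σ.card < τ.card := Finset.card_lt_card hst
  refine ⟨⟨fun ρ hρ => g.hD ρ (hDsub hρ), g.hL, ?_⟩, ?_⟩
  · intro ρ hρ τ' hsub' hne'
    have hmem : τ' ∈ D.faces := g.hsub ρ hρ τ' hsub' hne'
    have hc' : τ'.card ≤ c := le_trans (Finset.card_le_card hsub') (hLc ρ hρ)
    rw [hfaces]
    refine ⟨hmem, ?_⟩
    rintro (rfl | rfl) <;> omega
  refine ⟨σ, τ, ⟨Or.inl hσ, Or.inl hτ, hst, ?_⟩, hcard, ?_⟩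
  · rintro ρ (hρ | ⟨hvρ, hc | hc⟩) hss
    · exact huniq ρ hρ hss
    · exfalso
      rcases D.nonempty_mem hσ with ⟨x, hx⟩
      have : x ∈ ρ := hss.subset hx
      rw [hc] at this
      exact hvσ ((Finset.mem_singleton.mp this) ▸ hx)
    · exfalso
      have hsub2 : σ ⊆ ρ.erase v :=
        Finset.subset_erase.mpr ⟨hss.subset, hvσ⟩
      have := le_trans (Finset.card_le_card hsub2) (hLc _ hc)
      omega
  · ext x
    simp only [mem_Xg, Set.mem_diff, Set.mem_insert_iff, Set.mem_singleton_iff]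
    constructor
    · rintro (hx | hx)
      · rw [hfaces] at hx
        obtain ⟨hxD, hne⟩ := hx
        simp only [Set.mem_insert_iff, Set.mem_singleton_iff] at hne
        exact ⟨Or.inl hxD, hne⟩
      · refine ⟨Or.inr hx, ?_⟩
        rintro (rfl | rfl)
        · exact hvσ hx.1
        · exact hvτ hx.1
    · rintro ⟨hx | hx, hnot⟩
      · refine Or.inl ?_
        rw [hfaces]
        exact ⟨hx, by simpa using hnot⟩
      · exact Or.inr hx

theorem phase1_rtg {G : SimpleGraph V} {S : Finset V} {v : V} {D L L₂ : AbsComplex V}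
    (c : ℕ) (h : Relation.ReflTransGen (CollapseStepGE c) L L₂) (g : Good G S v D L) :
    ∃ g₂ : Good G S v D L₂,
      Relation.ReflTransGen (CollapseStepGE (c + 1)) (Xg G S v D L g) (Xg G S v D L₂ g₂) := by
  induction h with
  | refl => exact ⟨g, .refl⟩
  | tail hab hbc ih =>
      obtain ⟨g₁, hrtg⟩ := ih
      obtain ⟨g₂, hstep⟩ := phase1_step c hbc g₁
      exact ⟨g₂, hrtg.tail hstep⟩

theorem phase2_rtg {G : SimpleGraph V} {S : Finset V} {v : V} {D D₂ L : AbsComplex V}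
    (c : ℕ) (h : Relation.ReflTransGen (CollapseStepGE (c + 1)) D D₂) (g : Good G S v D L)
    (hLc : ∀ ρ ∈ L.faces, ρ.card ≤ c) :
    ∃ g₂ : Good G S v D₂ L,
      Relation.ReflTransGen (CollapseStepGE (c + 1)) (Xg G S v D L g) (Xg G S v D₂ L g₂) := by
  induction h with
  | refl => exact ⟨g, .refl⟩
  | tail hab hbc ih =>
      obtain ⟨g₁, hrtg⟩ := ih
      obtain ⟨g₂, hstep⟩ := phase2_step c hbc g₁ hLc
      exact ⟨g₂, hrtg.tail hstep⟩



/-- The neighbours of `v` inside `S`. -/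
def linkset (G : SimpleGraph V) [DecidableRel G.Adj] (S : Finset V) (v : V) : Finset V :=
  (S.erase v).filter (fun u => G.Adj v u)

theorem good_init (G : SimpleGraph V) [DecidableRel G.Adj] (S : Finset V) (v : V) :
    Good G S v (Kc G (S.erase v)) (Kc G (linkset G S v)) := by
  constructor
  · exact fun σ h => ⟨h.2.1, h.2.2⟩
  · intro ρ hρ
    refine ⟨hρ.2.1, ?_, ?_⟩
    · exact hρ.2.2.trans (Finset.filter_subset _ _)
    · intro u hu
      exact (Finset.mem_filter.mp (hρ.2.2 hu)).2
  · intro ρ hρ τ hsub hne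
    exact ⟨hne, hρ.2.1.subset (Finset.coe_subset.mpr hsub),
      hsub.trans (hρ.2.2.trans (Finset.filter_subset _ _))⟩

theorem Xg_init (G : SimpleGraph V) [DecidableRel G.Adj] {S : Finset V} {v : V} (hv : v ∈ S) :
    Xg G S v (Kc G (S.erase v)) (Kc G (linkset G S v)) (good_init G S v) = Kc G S := by
  apply AbsComplex.ext'
  ext x
  simp only [mem_Xg, mem_Kc]
  constructor
  · rintro (⟨hne, hcl, hsub⟩ | ⟨hvx, hc | ⟨hne, hcl, hsub⟩⟩)
    · exact ⟨hne, hcl, hsub.trans (Finset.erase_subset v S)⟩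
    · subst hc
      exact ⟨⟨v, Finset.mem_singleton_self v⟩, by simp, Finset.singleton_subset_iff.mpr hv⟩
    · have hxi : x = insert v (x.erase v) := (Finset.insert_erase hvx).symm
      refine ⟨⟨v, hvx⟩, ?_, ?_⟩
      · rw [hxi, Finset.coe_insert]
        refine hcl.insert ?_
        intro b hb hbv
        exact (Finset.mem_filter.mp (hsub (Finset.mem_coe.mp hb))).2
      · rw [hxi]
        intro y hy
        rcases Finset.mem_insert.mp hy with rfl | hy
        · exact hv
        · exact Finset.mem_of_mem_erase (Finset.mem_of_mem_filter _ (hsub hy))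
  · rintro ⟨hne, hcl, hsub⟩
    by_cases hvx : v ∈ x
    · refine Or.inr ⟨hvx, ?_⟩
      by_cases hne' : (x.erase v).Nonempty
      · refine Or.inr ⟨hne', hcl.subset (Finset.coe_subset.mpr (Finset.erase_subset v x)), ?_⟩
        intro u hu
        rcases Finset.mem_erase.mp hu with ⟨huv, hux⟩
        refine Finset.mem_filter.mpr ⟨Finset.mem_erase.mpr ⟨huv, hsub hux⟩, ?_⟩
        exact hcl (Finset.mem_coe.mpr hvx) (Finset.mem_coe.mpr hux) (Ne.symm huv)
      · refine Or.inl ?_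
        apply Finset.Subset.antisymm _ (Finset.singleton_subset_iff.mpr hvx)
        intro y hy
        rcases eq_or_ne y v with rfl | hyv
        · simp
        · exact absurd ⟨y, Finset.mem_erase.mpr ⟨hyv, hy⟩⟩ hne'
    · exact Or.inl ⟨hne, hcl, Finset.subset_erase.mpr ⟨hsub, hvx⟩⟩

/-- The assembly lemma: collapsibility of link and deletion give collapsibility. -/
theorem asm (G : SimpleGraph V) [DecidableRel G.Adj] {S : Finset V} {v : V} (hv : v ∈ S)
    (c : ℕ) (hlink : CollapsibleGE c (Kc G (linkset G S v)))
    (hdel : CollapsibleGE (c + 1) (Kc G (S.erase v))) :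
    CollapsibleGE (c + 1) (Kc G S) := by
  obtain ⟨L', hL', hLc⟩ := hlink
  obtain ⟨D', hD', hDc⟩ := hdel
  obtain ⟨g₁, h₁⟩ := phase1_rtg c hL' (good_init G S v)
  obtain ⟨g₂, h₂⟩ := phase2_rtg c hD' g₁ hLc
  refine ⟨Xg G S v D' L' g₂, ?_, ?_⟩
  · have := h₁.trans h₂
    rwa [Xg_init G hv] at this
  · rintro σ (hσ | ⟨hvσ, hc | hc⟩)
    · exact hDc σ hσ
    · subst hc; simp
    · have h1 := hLc _ hc
      have h2 : (σ.erase v).card = σ.card - 1 := Finset.card_erase_of_mem hvσ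
      have h3 : 1 ≤ σ.card := Finset.card_pos.mpr ⟨v, hvσ⟩
      omega



theorem asm1 (G : SimpleGraph V) [DecidableRel G.Adj] {S : Finset V} {v w : V} (hv : v ∈ S)
    (hw : linkset G S v = {w}) (hdel : CollapsibleGE 1 (Kc G (S.erase v))) :
    CollapsibleGE 1 (Kc G S) := by
  obtain ⟨D', hD', hDc⟩ := hdel
  have hwmem : w ∈ linkset G S v := by rw [hw]; exact Finset.mem_singleton_self w
  obtain ⟨hwS, hadj⟩ := Finset.mem_filter.mp hwmem
  have hvw : v ≠ w := G.ne_of_adj hadj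
  have claim1 : ∀ x ∈ (Kc G S).faces, v ∈ x → x = {v} ∨ x = {v, w} := by
    rintro x ⟨hne, hcl, hsub⟩ hvx
    have hxl : x.erase v ⊆ ({w} : Finset V) := by
      rw [← hw]
      intro u hu
      rcases Finset.mem_erase.mp hu with ⟨huv, hux⟩
      exact Finset.mem_filter.mpr ⟨Finset.mem_erase.mpr ⟨huv, hsub hux⟩,
        hcl (Finset.mem_coe.mpr hvx) (Finset.mem_coe.mpr hux) (Ne.symm huv)⟩
    have hxi : x = insert v (x.erase v) := (Finset.insert_erase hvx).symm
    rcases Finset.subset_singleton_iff.mp hxl with he | he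
    · left; rw [hxi, he]; simp
    · right; rw [hxi, he]
  have hvwS : ({v, w} : Finset V) ∈ (Kc G S).faces := by
    refine ⟨⟨v, by simp⟩, ?_, ?_⟩
    · have hcl : G.IsClique ({v, w} : Set V) := by
        rw [SimpleGraph.isClique_iff]
        rintro a (rfl | ha) b (rfl | hb) hab
        · exact absurd rfl hab
        · rw [Set.mem_singleton_iff.mp hb]; exact hadj
        · rw [Set.mem_singleton_iff.mp ha]; exact hadj.symm
        · rw [Set.mem_singleton_iff.mp ha, Set.mem_singleton_iff.mp hb] at hab
          exact absurd rfl hab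
      simpa using hcl
    · intro y hy
      rcases Finset.mem_insert.mp hy with rfl | hy
      · exact hv
      · rw [Finset.mem_singleton.mp hy]
        exact Finset.mem_of_mem_erase hwS
  have hstep : CollapseStepGE 1 (Kc G S) (Kc G (S.erase v)) := by
    refine ⟨{v}, {v, w}, ⟨⟨⟨v, by simp⟩, by simp, Finset.singleton_subset_iff.mpr hv⟩,
      hvwS, ?_, ?_⟩, by simp, ?_⟩
    · constructor
      · intro x hx
        rw [Finset.mem_singleton.mp hx]; simp
      · intro hcon
        have := hcon (by simp : w ∈ ({v, w} : Finset V))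
        exact hvw (Finset.mem_singleton.mp this).symm
    · intro ρ hρ hss
      have hvρ : v ∈ ρ := hss.subset (Finset.mem_singleton_self v)
      rcases claim1 ρ hρ hvρ with rfl | rfl
      · exact absurd hss (ssubset_irrefl _)
      · rfl
    · ext x
      simp only [mem_Kc, Set.mem_diff, Set.mem_insert_iff, Set.mem_singleton_iff]
      constructor
      · rintro ⟨hne, hcl, hsub⟩
        have hvx : v ∉ x := fun h => (Finset.mem_erase.mp (hsub h)).1 rfl
        refine ⟨⟨hne, hcl, hsub.trans (Finset.erase_subset v S)⟩, ?_⟩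
        rintro (rfl | rfl)
        · exact hvx (Finset.mem_singleton_self v)
        · exact hvx (Finset.mem_insert_self v {w})
      · rintro ⟨⟨hne, hcl, hsub⟩, hnot⟩
        refine ⟨hne, hcl, Finset.subset_erase.mpr ⟨hsub, fun hvx => ?_⟩⟩
        rcases claim1 x ⟨hne, hcl, hsub⟩ hvx with rfl | rfl
        · exact hnot (Or.inl rfl)
        · exact hnot (Or.inr rfl)
  exact ⟨D', hD'.head hstep, hDc⟩

/-- Invariant for the cone collapse: `A` is the set of removed `v`-free faces. -/
def ConeProp (G : SimpleGraph V) (S : Finset V) (v : V) (d : ℕ) (σ : Finset V) : Prop :=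
  σ ⊆ S.erase v ∧ σ.Nonempty ∧ G.IsClique (σ : Set V) ∧ d ≤ σ.card

def ConeInv (G : SimpleGraph V) (S : Finset V) (v : V) (d : ℕ)
    (A : Finset (Finset V)) : Prop :=
  (∀ a ∈ A, ConeProp G S v d a) ∧
    (∀ a ∈ A, ∀ ρ, ConeProp G S v d ρ → a ⊆ ρ → ρ ∈ A)

/-- The intermediate complexes of the cone collapse. -/
def coneC (G : SimpleGraph V) (S : Finset V) (v : V) (d : ℕ) (A : Finset (Finset V))
    (hA : ConeInv G S v d A) : AbsComplex V where
  faces := (Kc G S).faces \ (↑A ∪ (insert v) '' ↑A)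
  nonempty_mem := fun σ h => (Kc G S).nonempty_mem h.1
  down_closed := by
    rintro σ τ ⟨hσK, hσR⟩ hsub hne
    refine ⟨(Kc G S).down_closed hσK hsub hne, ?_⟩
    obtain ⟨hσne, hσcl, hσS⟩ := hσK
    rintro (hτA | ⟨a, haA, rfl⟩)
    · have hτA' : τ ∈ A := hτA
      obtain ⟨hτe, hτne, hτcl, hτc⟩ := hA.1 τ hτA'
      by_cases hvσ : v ∈ σ
      · have hτe2 : τ ⊆ σ.erase v := Finset.subset_erase.mpr
          ⟨hsub, fun h => (Finset.mem_erase.mp (hτe h)).1 rfl⟩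
        have hprop : ConeProp G S v d (σ.erase v) :=
          ⟨Finset.erase_subset_erase v hσS,
            hτne.mono hτe2,
            hσcl.subset (Finset.coe_subset.mpr (Finset.erase_subset v σ)),
            le_trans hτc (Finset.card_le_card hτe2)⟩
        have : σ.erase v ∈ A := hA.2 τ hτA' _ hprop hτe2
        exact hσR (Or.inr ⟨σ.erase v, Finset.mem_coe.mpr this, Finset.insert_erase hvσ⟩)
      · have hprop : ConeProp G S v d σ :=
          ⟨Finset.subset_erase.mpr ⟨hσS, hvσ⟩, hσne, hσcl,
            le_trans hτc (Finset.card_le_card hsub)⟩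
        exact hσR (Or.inl (Finset.mem_coe.mpr (hA.2 τ hτA' σ hprop hsub)))
    · have haA' : a ∈ A := haA
      obtain ⟨hae, hane, hacl, hac⟩ := hA.1 a haA'
      have hva : v ∉ a := fun h => (Finset.mem_erase.mp (hae h)).1 rfl
      have hvσ : v ∈ σ := hsub (Finset.mem_insert_self v a)
      have hsub2 : a ⊆ σ.erase v := Finset.subset_erase.mpr
        ⟨(Finset.subset_insert v a).trans hsub |>.trans (le_refl _), hva⟩
      have hprop : ConeProp G S v d (σ.erase v) :=
        ⟨Finset.erase_subset_erase v hσS, hane.mono hsub2,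
          hσcl.subset (Finset.coe_subset.mpr (Finset.erase_subset v σ)),
          le_trans hac (Finset.card_le_card hsub2)⟩
      have : σ.erase v ∈ A := hA.2 a haA' _ hprop hsub2
      exact hσR (Or.inr ⟨σ.erase v, Finset.mem_coe.mpr this, Finset.insert_erase hvσ⟩)



theorem cone_step (G : SimpleGraph V) {S : Finset V} {v : V} (hv : v ∈ S)
    (hdom : ∀ u ∈ S, u ≠ v → G.Adj v u) (d : ℕ)
    {A : Finset (Finset V)} (hA : ConeInv G S v d A) {σ : Finset V}
    (hσP : ConeProp G S v d σ) (hσA : σ ∉ A)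
    (hmax : ∀ ρ, ConeProp G S v d ρ → ρ ∉ A → ρ.card ≤ σ.card) :
    ∃ hA' : ConeInv G S v d (insert σ A),
      CollapseStepGE d (coneC G S v d A hA) (coneC G S v d (insert σ A) hA') := by
  obtain ⟨hσe, hσne, hσcl, hσc⟩ := hσP
  have hvσ : v ∉ σ := fun h => (Finset.mem_erase.mp (hσe h)).1 rfl
  have hA' : ConeInv G S v d (insert σ A) := by
    constructor
    · intro a ha
      rcases Finset.mem_insert.mp ha with rfl | ha
      · exact ⟨hσe, hσne, hσcl, hσc⟩
      · exact hA.1 a ha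
    · intro a ha ρ hρP haρ
      rcases Finset.mem_insert.mp ha with rfl | ha
      · by_cases hρa : ρ = a
        · subst hρa; exact Finset.mem_insert_self ρ A
        · refine Finset.mem_insert_of_mem ?_
          by_contra hρA
          have := hmax ρ hρP hρA
          have hlt := Finset.card_lt_card (Finset.ssubset_iff_subset_ne.mpr ⟨haρ, Ne.symm hρa⟩)
          omega
      · exact Finset.mem_insert_of_mem (hA.2 a ha ρ hρP haρ)
  have hKσ : σ ∈ (Kc G S).faces := ⟨hσne, hσcl, hσe.trans (Finset.erase_subset v S)⟩
  have hKvσ : insert v σ ∈ (Kc G S).faces := by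
    refine ⟨⟨v, Finset.mem_insert_self v σ⟩, ?_, ?_⟩
    · rw [Finset.coe_insert]
      refine hσcl.insert ?_
      intro b hb hbv
      exact hdom b (Finset.mem_of_mem_erase (hσe (Finset.mem_coe.mp hb))) (Ne.symm hbv)
    · exact Finset.insert_subset hv (hσe.trans (Finset.erase_subset v S))
  refine ⟨hA', σ, insert v σ, ⟨?_, ?_, Finset.ssubset_insert hvσ, ?_⟩, hσc, ?_⟩
  · refine ⟨hKσ, ?_⟩
    rintro (h | ⟨a, haA, he⟩)
    · exact hσA h
    · exact hvσ (he ▸ Finset.mem_insert_self v a)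
  · refine ⟨hKvσ, ?_⟩
    rintro (h | ⟨a, haA, he⟩)
    · exact absurd ((hA.1 _ h).1 (Finset.mem_insert_self v σ)) (by simp)
    · have hva : v ∉ a := fun hx => (Finset.mem_erase.mp ((hA.1 a haA).1 hx)).1 rfl
      have : σ = a := by
        have := congrArg (fun t => Finset.erase t v) he
        simpa [Finset.erase_insert hva, Finset.erase_insert hvσ] using this.symm
      exact hσA (this ▸ haA)
  · rintro ρ ⟨⟨hρne, hρcl, hρS⟩, hρR⟩ hss
    by_cases hvρ : v ∈ ρ
    · have hsub2 : σ ⊆ ρ.erase v := Finset.subset_erase.mpr ⟨hss.subset, hvσ⟩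
      by_cases heq : σ = ρ.erase v
      · rw [← Finset.insert_erase hvρ, ← heq]
      · exfalso
        have hρP : ConeProp G S v d (ρ.erase v) :=
          ⟨Finset.erase_subset_erase v hρS, hσne.mono hsub2,
            hρcl.subset (Finset.coe_subset.mpr (Finset.erase_subset v ρ)),
            le_trans hσc (Finset.card_le_card hsub2)⟩
        have hlt := Finset.card_lt_card (Finset.ssubset_iff_subset_ne.mpr ⟨hsub2, heq⟩)
        have hmem : ρ.erase v ∈ A := by
          by_contra hno
          have := hmax _ hρP hno
          omega
        exact hρR (Or.inr ⟨ρ.erase v, Finset.mem_coe.mpr hmem, Finset.insert_erase hvρ⟩)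
    · exfalso
      have hρP : ConeProp G S v d ρ :=
        ⟨Finset.subset_erase.mpr ⟨hρS, hvρ⟩, hρne, hρcl,
          le_trans hσc (Finset.card_le_card hss.subset)⟩
      have hlt := Finset.card_lt_card hss
      have hmem : ρ ∈ A := by
        by_contra hno
        have := hmax _ hρP hno
        omega
      exact hρR (Or.inl (Finset.mem_coe.mpr hmem))
  · show (Kc G S).faces \ _ = ((Kc G S).faces \ _) \ _
    rw [Set.diff_diff]
    congr 1
    ext x
    simp only [Finset.coe_insert, Set.image_insert_eq, Set.mem_union,
      Set.mem_insert_iff, Set.mem_singleton_iff, Finset.mem_coe, Set.mem_image]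
    aesop

theorem cone (G : SimpleGraph V) {S : Finset V} {v : V} (hv : v ∈ S)
    (hdom : ∀ u ∈ S, u ≠ v → G.Adj v u) (d : ℕ) (hd : 1 ≤ d) :
    CollapsibleGE d (Kc G S) := by
  classical
  have hinv0 : ConeInv G S v d ∅ := ⟨by simp, by simp⟩
  have hstart : coneC G S v d ∅ hinv0 = Kc G S := by
    apply AbsComplex.ext'
    show (Kc G S).faces \ _ = (Kc G S).faces
    simp
  set Fam : Finset (Finset V) :=
    (S.erase v).powerset.filter
      (fun σ => σ.Nonempty ∧ G.IsClique (σ : Set V) ∧ d ≤ σ.card) with hFamdef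
  have hmemFam : ∀ σ, σ ∈ Fam ↔ ConeProp G S v d σ := by
    intro σ
    simp only [hFamdef, Finset.mem_filter, Finset.mem_powerset, ConeProp]
  suffices key : ∀ (k : ℕ) (A : Finset (Finset V)) (hA : ConeInv G S v d A),
      (Fam \ A).card = k →
      ∃ Y, Relation.ReflTransGen (CollapseStepGE d) (coneC G S v d A hA) Y ∧
        ∀ σ ∈ Y.faces, σ.card ≤ d by
    obtain ⟨Y, h1, h2⟩ := key (Fam \ ∅).card ∅ hinv0 rfl
    rw [hstart] at h1
    exact ⟨Y, h1, h2⟩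
  intro k
  induction k using Nat.strong_induction_on with
  | _ k ih =>
    intro A hA hk
    by_cases hFA : (Fam \ A).Nonempty
    · obtain ⟨σ, hσFA, hσmax⟩ := Finset.exists_max_image (Fam \ A) Finset.card hFA
      obtain ⟨hσF, hσA⟩ := Finset.mem_sdiff.mp hσFA
      have hσP : ConeProp G S v d σ := (hmemFam σ).mp hσF
      have hmax : ∀ ρ, ConeProp G S v d ρ → ρ ∉ A → ρ.card ≤ σ.card := fun ρ hρ hno =>
        hσmax ρ (Finset.mem_sdiff.mpr ⟨(hmemFam ρ).mpr hρ, hno⟩)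
      obtain ⟨hA', hstep⟩ := cone_step G hv hdom d hA hσP hσA hmax
      have hklt : (Fam \ insert σ A).card < k := by
        rw [Finset.sdiff_insert, Finset.card_erase_of_mem hσFA, hk]
        have : 0 < k := hk ▸ Finset.card_pos.mpr hFA
        omega
      obtain ⟨Y, hY, hYb⟩ := ih _ hklt (insert σ A) hA' rfl
      exact ⟨Y, hY.head hstep, hYb⟩
    · refine ⟨_, Relation.ReflTransGen.refl, ?_⟩
      have hFamA : Fam ⊆ A := by
        intro x hx
        by_contra hno
        exact hFA ⟨x, Finset.mem_sdiff.mpr ⟨hx, hno⟩⟩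
      rintro σ ⟨⟨hσne, hσcl, hσS⟩, hσR⟩
      by_contra hbig
      push_neg at hbig
      by_cases hvσ : v ∈ σ
      · have hcard : (σ.erase v).card = σ.card - 1 := Finset.card_erase_of_mem hvσ
        have hprop : ConeProp G S v d (σ.erase v) :=
          ⟨Finset.erase_subset_erase v hσS,
            Finset.card_pos.mp (by omega),
            hσcl.subset (Finset.coe_subset.mpr (Finset.erase_subset v σ)),
            by omega⟩
        have : σ.erase v ∈ A := hFamA ((hmemFam _).mpr hprop)
        exact hσR (Or.inr ⟨σ.erase v, Finset.mem_coe.mpr this, Finset.insert_erase hvσ⟩)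
      · have hprop : ConeProp G S v d σ :=
          ⟨Finset.subset_erase.mpr ⟨hσS, hvσ⟩, hσne, hσcl, by omega⟩
        exact hσR (Or.inl (Finset.mem_coe.mpr (hFamA ((hmemFam _).mpr hprop))))



/-- Main induction: a flag complex on at most `2d+1` vertices is `d`-collapsible,
via collapses whose free faces have cardinality at least `d`. -/
theorem Tmain (G : SimpleGraph V) [DecidableRel G.Adj] :
    ∀ (n : ℕ) (S : Finset V), S.card = n → ∀ d : ℕ, 1 ≤ d → S.card ≤ 2 * d + 1 →
      CollapsibleGE d (Kc G S) := by
  intro n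
  induction n using Nat.strong_induction_on with
  | _ n ih =>
    intro S hSn d hd hcard
    rcases S.eq_empty_or_nonempty with rfl | ⟨v, hv⟩
    · refine ⟨Kc G ∅, Relation.ReflTransGen.refl, ?_⟩
      intro σ hσ
      rw [Kc_empty_faces] at hσ
      exact absurd hσ (Set.notMem_empty σ)
    · by_cases hdom : ∃ w ∈ S, ∀ u ∈ S, u ≠ w → G.Adj w u
      · obtain ⟨w, hwS, hwdom⟩ := hdom
        exact cone G hwS hwdom d hd
      · push_neg at hdom
        obtain ⟨u, huS, huv, hnadj⟩ := hdom v hv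
        have hScard : 1 ≤ S.card := Finset.card_pos.mpr ⟨v, hv⟩
        have hdcard : (S.erase v).card = S.card - 1 := Finset.card_erase_of_mem hv
        have hlsub : linkset G S v ⊆ (S.erase v).erase u := by
          intro x hx
          obtain ⟨hx1, hx2⟩ := Finset.mem_filter.mp hx
          refine Finset.mem_erase.mpr ⟨?_, hx1⟩
          rintro rfl
          exact hnadj hx2
        have hlcard : (linkset G S v).card ≤ S.card - 2 := by
          have h1 := Finset.card_le_card hlsub
          have h2 : ((S.erase v).erase u).card = (S.erase v).card - 1 :=
            Finset.card_erase_of_mem (Finset.mem_erase.mpr ⟨huv, huS⟩)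
          omega
        have hdel : ∀ d' : ℕ, 1 ≤ d' → S.card - 1 ≤ 2 * d' + 1 →
            CollapsibleGE d' (Kc G (S.erase v)) := by
          intro d' h1 h2
          exact ih (S.card - 1) (by omega) (S.erase v) (by omega) d' h1 (by omega)
        rcases Nat.lt_or_ge d 2 with hd1 | hd2
        · have hdeq : d = 1 := by omega
          subst hdeq
          have hl1 : (linkset G S v).card ≤ 1 := by omega
          rcases (linkset G S v).eq_empty_or_nonempty with hle | ⟨w, hw⟩
          · have hlink : CollapsibleGE 0 (Kc G (linkset G S v)) := by
              rw [hle]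
              refine ⟨Kc G ∅, Relation.ReflTransGen.refl, ?_⟩
              intro σ hσ
              rw [Kc_empty_faces] at hσ
              exact absurd hσ (Set.notMem_empty σ)
            exact asm G hv 0 hlink (hdel 1 le_rfl (by omega))
          · have hlw : linkset G S v = {w} := by
              apply Finset.eq_singleton_iff_unique_mem.mpr
              exact ⟨hw, fun x hx => Finset.card_le_one.mp hl1 x hx w hw⟩
            exact asm1 G hv hlw (hdel 1 le_rfl (by omega))
        · obtain ⟨c, rfl⟩ : ∃ c, d = c + 1 := ⟨d - 1, by omega⟩
          have hlink : CollapsibleGE c (Kc G (linkset G S v)) :=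
            ih (linkset G S v).card (by omega) (linkset G S v) rfl c (by omega) (by omega)
          exact asm G hv c hlink (hdel (c + 1) (by omega) (by omega))

end Stmt3Aux

/-- for `d ≥ 1`, a flag complex on at most `2d + 2` vertices which is not
`d`-collapsible has all vertices of degree at least `2d` in its 1-skeleton. -/
theorem stmt3 {V : Type*} [Fintype V] [DecidableEq V] (d : ℕ) (hd : 1 ≤ d)
    (G : SimpleGraph V) [DecidableRel G.Adj]
    (hcard : Fintype.card V ≤ 2 * d + 2)
    (hnc : ¬ Collapsible d (cliqueComplex G)) :
    ∀ v : V, 2 * d ≤ G.degree v := by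
  intro v
  by_contra hdeg
  push_neg at hdeg
  apply hnc
  apply Stmt3Aux.collapsible_of_GE
  have hKc : cliqueComplex G = Stmt3Aux.Kc G Finset.univ := by
    apply Stmt3Aux.AbsComplex.ext'
    ext σ
    simp only [cliqueComplex, Stmt3Aux.mem_Kc, Set.mem_setOf_eq]
    exact ⟨fun ⟨h1, h2⟩ => ⟨h1, h2, Finset.subset_univ σ⟩, fun ⟨h1, h2, _⟩ => ⟨h1, h2⟩⟩
  rw [hKc]
  have hvU : v ∈ (Finset.univ : Finset V) := Finset.mem_univ v
  have hls : Stmt3Aux.linkset G Finset.univ v = G.neighborFinset v := by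
    ext u
    simp only [Stmt3Aux.linkset, Finset.mem_filter, Finset.mem_erase, Finset.mem_univ,
      and_true, true_and, SimpleGraph.mem_neighborFinset]
    exact ⟨fun h => h.2, fun h => ⟨h.ne', h⟩⟩
  have hlscard : (Stmt3Aux.linkset G Finset.univ v).card = G.degree v := by
    rw [hls]; rfl
  have hecard : ((Finset.univ : Finset V).erase v).card = Fintype.card V - 1 := by
    rw [Finset.card_erase_of_mem hvU, Finset.card_univ]
  have hcardV : 1 ≤ Fintype.card V := Fintype.card_pos_iff.mpr ⟨v⟩
  have hdel : Stmt3Aux.CollapsibleGE d (Stmt3Aux.Kc G ((Finset.univ : Finset V).erase v)) :=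
    Stmt3Aux.Tmain G ((Finset.univ : Finset V).erase v).card ((Finset.univ : Finset V).erase v)
      rfl d hd (by omega)
  rcases Nat.lt_or_ge d 2 with hd1 | hd2
  · have hdeq : d = 1 := by omega
    subst hdeq
    have hl1 : (Stmt3Aux.linkset G Finset.univ v).card ≤ 1 := by omega
    rcases (Stmt3Aux.linkset G Finset.univ v).eq_empty_or_nonempty with hle | ⟨w, hw⟩
    · have hlink : Stmt3Aux.CollapsibleGE 0 (Stmt3Aux.Kc G (Stmt3Aux.linkset G Finset.univ v)) := by
        rw [hle]
        refine ⟨Stmt3Aux.Kc G ∅, Relation.ReflTransGen.refl, ?_⟩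
        intro σ hσ
        rw [Stmt3Aux.Kc_empty_faces] at hσ
        exact absurd hσ (Set.notMem_empty σ)
      exact Stmt3Aux.asm G hvU 0 hlink hdel
    · have hlw : Stmt3Aux.linkset G Finset.univ v = {w} := by
        apply Finset.eq_singleton_iff_unique_mem.mpr
        exact ⟨hw, fun x hx => Finset.card_le_one.mp hl1 x hx w hw⟩
      exact Stmt3Aux.asm1 G hvU hlw hdel
  · obtain ⟨c, rfl⟩ : ∃ c, d = c + 1 := ⟨d - 1, by omega⟩
    have hlink : Stmt3Aux.CollapsibleGE c (Stmt3Aux.Kc G (Stmt3Aux.linkset G Finset.univ v)) :=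
      Stmt3Aux.Tmain G (Stmt3Aux.linkset G Finset.univ v).card (Stmt3Aux.linkset G Finset.univ v)
        rfl c (by omega) (by omega)
    exact Stmt3Aux.asm G hvU c hlink hdel
end

section
/- Let H be a finite graph with minimum degree at least 2d such that every vertex of degree exactly 2d has at least one neighbor of degree strictly greater than 2d, and assume H has at least one vertex of degree greater than 2d. Then the number of edges of H is at least (d + 1/(4+4d))·|V(H)|. -/
/-- if a finite graph has minimum degree at least `2d`, every vertex of
degree exactly `2d` has a neighbor of degree strictly greater than `2d`, and some vertex
has degree greater than `2d`, then the graph has at least `(d + 1/(4+4d))·|V|` edges. -/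
theorem stmt5 {V : Type*} [Fintype V] [DecidableEq V] (d : ℕ) (hd : 1 ≤ d)
    (H : SimpleGraph V) [DecidableRel H.Adj]
    (hmin : ∀ v : V, 2 * d ≤ H.degree v)
    (hnbr : ∀ v : V, H.degree v = 2 * d → ∃ w : V, H.Adj v w ∧ 2 * d < H.degree w)
    (hbig : ∃ v : V, 2 * d < H.degree v) :
    ((d : ℝ) + 1 / (4 + 4 * d)) * Fintype.card V ≤ (H.edgeFinset.card : ℝ) := by
  classical
  set S : Finset V := Finset.univ.filter (fun v => 2 * d < H.degree v) with hS
  set Sc : Finset V := Finset.univ.filter (fun v => ¬ 2 * d < H.degree v) with hSc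
  set n : ℕ := Fintype.card V with hn
  set E : ℕ := H.edgeFinset.card with hE
  have hsplit : S.card + Sc.card = n := by
    rw [hn, ← Finset.card_univ]
    exact Finset.card_filter_add_card_filter_not _
  have hsum : ∑ v, H.degree v = 2 * E := H.sum_degrees_eq_twice_card_edges
  have hdecomp : ∑ v, H.degree v = (∑ v ∈ S, H.degree v) + ∑ v ∈ Sc, H.degree v :=
    (Finset.sum_filter_add_sum_filter_not Finset.univ _ _).symm
  have hdeg : ∀ v ∈ Sc, H.degree v = 2 * d := fun v hv =>
    le_antisymm (not_lt.mp (Finset.mem_filter.mp hv).2) (hmin v)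
  -- bound A : 2dn + |S| ≤ Σ deg
  have hSsum : (2 * d + 1) * S.card ≤ ∑ v ∈ S, H.degree v := by
    rw [mul_comm]
    exact Finset.card_nsmul_le_sum S _ _ (fun v hv => Nat.succ_le_of_lt (Finset.mem_filter.mp hv).2)
  have hScsum : 2 * d * Sc.card ≤ ∑ v ∈ Sc, H.degree v := by
    rw [mul_comm]
    exact Finset.card_nsmul_le_sum Sc _ _ (fun v _ => hmin v)
  have hA : 2 * d * n + S.card ≤ 2 * E := by
    rw [← hsum, hdecomp, ← hsplit]
    calc 2 * d * (S.card + Sc.card) + S.card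
        = (2 * d + 1) * S.card + 2 * d * Sc.card := by ring
      _ ≤ _ := add_le_add hSsum hScsum
  -- bound B : (2d+1)|Sc| ≤ Σ deg, via injection of Sc into big-vertex incidences
  have hinj : Sc.card ≤ ∑ w ∈ S, H.degree w := by
    have hcard : Sc.card ≤ (S.sigma fun w => H.neighborFinset w).card := by
      apply Finset.card_le_card_of_injOn
        (fun v => if h : H.degree v = 2 * d then ⟨(hnbr v h).choose, v⟩ else ⟨v, v⟩)
      · intro v hv
        have h := hdeg v hv
        obtain ⟨hadj, hw⟩ := (hnbr v h).choose_spec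
        simp only [Finset.mem_coe, dif_pos h, Finset.mem_sigma, SimpleGraph.mem_neighborFinset]
        exact ⟨Finset.mem_filter.mpr ⟨Finset.mem_univ _, hw⟩, hadj.symm⟩
      · intro a ha b hb hab
        simp only [dif_pos (hdeg a ha), dif_pos (hdeg b hb)] at hab
        exact congrArg (fun p => p.2) hab
    calc Sc.card ≤ (S.sigma fun w => H.neighborFinset w).card := hcard
      _ = ∑ w ∈ S, (H.neighborFinset w).card := Finset.card_sigma _ _
      _ = ∑ w ∈ S, H.degree w := rfl
  have hB : (2 * d + 1) * Sc.card ≤ 2 * E := by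
    rw [← hsum, hdecomp]
    calc (2 * d + 1) * Sc.card = Sc.card + 2 * d * Sc.card := by ring
      _ ≤ _ := add_le_add hinj hScsum
  -- combine
  have hkey : (2 * d + 1) ^ 2 * n ≤ (4 * d + 4) * E := by
    calc (2 * d + 1) ^ 2 * n
        = (2 * d + 1) * (2 * d * n + S.card) + (2 * d + 1) * Sc.card := by
          rw [← hsplit]; ring
      _ ≤ (2 * d + 1) * (2 * E) + 2 * E :=
          add_le_add (Nat.mul_le_mul_left _ hA) hB
      _ = (4 * d + 4) * E := by ring
  have h4 : (0 : ℝ) < 4 + 4 * d := by positivity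
  rw [show ((d : ℝ) + 1 / (4 + 4 * d)) = (2 * d + 1) ^ 2 / (4 + 4 * d) by
    field_simp; ring]
  rw [div_mul_eq_mul_div, div_le_iff₀ h4]
  have hc := (Nat.cast_le (α := ℝ)).mpr hkey
  push_cast at hc ⊢
  linarith
end

section
/- If X is a simplicial complex, v a vertex of X such that the link of v in X is (d−1)-collapsible, and the deletion X \ {v} is d-collapsible, then X is d-collapsible. -/
/-- The link of a vertex `v` in the complex `X`. -/
def link {V : Type*} [DecidableEq V] (X : AbsComplex V) (v : V) : AbsComplex V where
  faces := {τ | τ.Nonempty ∧ v ∉ τ ∧ insert v τ ∈ X.faces}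
  nonempty_mem := fun _ h => h.1
  down_closed := by
    rintro σ τ ⟨hne, hv, hmem⟩ hsub htne
    exact ⟨htne, fun h => hv (hsub h),
      X.down_closed hmem (Finset.insert_subset_insert _ hsub) (Finset.insert_nonempty _ _)⟩

/-- The deletion of a vertex `v` from the complex `X`. -/
def deletion {V : Type*} (X : AbsComplex V) (v : V) : AbsComplex V where
  faces := {σ | σ ∈ X.faces ∧ v ∉ σ}
  nonempty_mem := fun _ h => X.nonempty_mem h.1
  down_closed := fun _ τ h hsub hne =>
    ⟨X.down_closed h.1 hsub hne, fun hv => h.2 (hsub hv)⟩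

namespace Stmt10Aux

variable {V : Type*}

theorem absComplex_ext {X Y : AbsComplex V} (h : X.faces = Y.faces) : X = Y := by
  cases X; cases Y; cases h; rfl

/-- Removing a free face together with its coface yields a complex. -/
def collapseAt (X : AbsComplex V) (σ τ : Finset V) (h : IsFreeFace X σ τ) : AbsComplex V where
  faces := X.faces \ {σ, τ}
  nonempty_mem := fun _ hs => X.nonempty_mem hs.1
  down_closed := by
    rintro a b ⟨ha, ha2⟩ hsub hbne
    refine ⟨X.down_closed ha hsub hbne, ?_⟩
    rintro (rfl | rfl)
    · rcases eq_or_ne a b with rfl | hne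
      · exact ha2 (Or.inl rfl)
      · exact ha2 (Or.inr (h.2.2.2 a ha (lt_of_le_of_ne hsub (Ne.symm hne))))
    · rcases eq_or_ne a b with rfl | hne
      · exact ha2 (Or.inr rfl)
      · have hba : b ⊂ a := lt_of_le_of_ne hsub (Ne.symm hne)
        exact ha2 (Or.inr (h.2.2.2 a ha (h.2.2.1.trans hba)))

theorem collapseStep_collapseAt {X : AbsComplex V} {σ τ : Finset V} (h : IsFreeFace X σ τ) :
    CollapseStep X (collapseAt X σ τ h) := ⟨σ, τ, h, rfl⟩

theorem collapseStep_subset {X Y : AbsComplex V} (h : CollapseStep X Y) : Y.faces ⊆ X.faces := by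
  obtain ⟨σ, τ, _, hfaces⟩ := h
  rw [hfaces]; exact Set.diff_subset

theorem rtg_subset {X Y : AbsComplex V} (h : Relation.ReflTransGen CollapseStep X Y) :
    Y.faces ⊆ X.faces := by
  induction h with
  | refl => exact subset_rfl
  | tail _ hbc ih => exact (collapseStep_subset hbc).trans ih

/-! ### Stage 2: shadowing the deletion's collapse sequence -/

/-- Invariant relating the current state `D` of the deletion's collapse sequence to the
current state `Z` of the actual collapse sequence: every face of `Z` of cardinality at least
`d+1` is a face of `D`, and every face of `D` missing from `Z` has cardinality `d` and no
proper coface in `D`. -/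
def Inv (d : ℕ) (D Z : AbsComplex V) : Prop :=
  (∀ ρ ∈ Z.faces, d + 1 ≤ ρ.card → ρ ∈ D.faces) ∧
  (∀ γ ∈ D.faces, γ ∉ Z.faces → γ.card = d ∧ ∀ ρ ∈ D.faces, ¬ γ ⊂ ρ)

theorem step2 {d : ℕ} (hd : 1 ≤ d) {D D' : AbsComplex V} (h : CollapseStep D D')
    {Z : AbsComplex V} (hZ : Inv d D Z) :
    ∃ Z', Relation.ReflTransGen CollapseStep Z Z' ∧ Inv d D' Z' := by
  obtain ⟨σ, τ, ⟨hσD, hτD, hst, huniq⟩, hD'⟩ := h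
  obtain ⟨H1, H2⟩ := hZ
  have hσne : σ ∉ ({σ, τ} : Set (Finset V)) → False := fun h => h (Or.inl rfl)
  by_cases hτZ : τ ∈ Z.faces
  · by_cases hZuniq : ∀ ρ ∈ Z.faces, σ ⊂ ρ → ρ = τ
    · -- Case 1: (σ, τ) is free in Z as well.
      have hσZ : σ ∈ Z.faces := by
        by_contra hcon
        exact (H2 σ hσD hcon).2 τ hτD hst
      have hfree : IsFreeFace Z σ τ := ⟨hσZ, hτZ, hst, hZuniq⟩
      refine ⟨collapseAt Z σ τ hfree, Relation.ReflTransGen.single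
        (collapseStep_collapseAt hfree), ?_, ?_⟩
      · intro ρ hρ hcard
        obtain ⟨hρZ, hρne⟩ := hρ
        rw [hD']
        exact ⟨H1 ρ hρZ hcard, hρne⟩
      · intro γ hγ hγZ
        rw [hD'] at hγ
        obtain ⟨hγD, hγne⟩ := hγ
        by_cases hγZ' : γ ∈ Z.faces
        · exact absurd (⟨hγZ', hγne⟩ : γ ∈ (collapseAt Z σ τ hfree).faces) hγZ
        · obtain ⟨hc, hnc⟩ := H2 γ hγD hγZ'
          exact ⟨hc, fun ρ hρ => hnc ρ (hD' ▸ hρ).1⟩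
    · push_neg at hZuniq
      obtain ⟨ρ₀, hρ₀Z, hρ₀s, hρ₀ne⟩ := hZuniq
      have hρ₀D : ρ₀ ∉ D.faces := fun hmem => hρ₀ne (huniq ρ₀ hmem hρ₀s)
      have hρ₀card : ρ₀.card ≤ d := by
        by_contra hcon
        exact hρ₀D (H1 ρ₀ hρ₀Z (by omega))
      have hσcard : σ.card < d := lt_of_lt_of_le (Finset.card_lt_card hρ₀s) hρ₀card
      by_cases hτcard : d + 1 ≤ τ.card
      · -- Case 2: β-trick.
        obtain ⟨β, hσβ, hβτ, hβcard⟩ :=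
          Finset.exists_subsuperset_card_eq (n := d) hst.subset (by omega) (by omega)
        have hβd : β.card = d := by omega
        have hβssub : β ⊂ τ := lt_of_le_of_ne hβτ (fun h => by
          rw [h] at hβd; omega)
        have hβD : β ∈ D.faces := D.down_closed hτD hβτ
          (Finset.card_pos.mp (by omega))
        have hβZ : β ∈ Z.faces := by
          by_contra hcon
          exact (H2 β hβD hcon).2 τ hτD hβssub
        have hβuniq : ∀ ρ ∈ Z.faces, β ⊂ ρ → ρ = τ := by
          intro ρ hρ hβρ
          by_cases hρD : ρ ∈ D.faces
          · exact huniq ρ hρD (lt_of_le_of_lt hσβ hβρ)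
          · have : ρ.card ≤ d := by
              by_contra hcon
              exact hρD (H1 ρ hρ (by omega))
            have := Finset.card_lt_card hβρ
            omega
        have hfree : IsFreeFace Z β τ := ⟨hβZ, hτZ, hβssub, hβuniq⟩
        refine ⟨collapseAt Z β τ hfree, Relation.ReflTransGen.single
          (collapseStep_collapseAt hfree), ?_, ?_⟩
        · intro ρ hρ hcard
          obtain ⟨hρZ, hρne⟩ := hρ
          rw [hD']
          refine ⟨H1 ρ hρZ hcard, ?_⟩
          rintro (rfl | rfl)
          · omega
          · exact hρne (Or.inr rfl)
        · intro γ hγ hγZ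
          rw [hD'] at hγ
          obtain ⟨hγD, hγne⟩ := hγ
          by_cases hγZ' : γ ∈ Z.faces
          · -- then γ ∈ {β, τ}, and γ ≠ τ, so γ = β
            have hγβτ : γ ∈ ({β, τ} : Set (Finset V)) := by
              by_contra hcon
              exact hγZ ⟨hγZ', hcon⟩
            have hγβ : γ = β := by
              rcases hγβτ with rfl | rfl
              · rfl
              · exact absurd (Or.inr rfl) hγne
            subst hγβ
            refine ⟨hβd, ?_⟩
            intro ρ hρ hsub
            rw [hD'] at hρ
            have := huniq ρ hρ.1 (lt_of_le_of_lt hσβ hsub)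
            exact hρ.2 (Or.inr this)
          · obtain ⟨hc, hnc⟩ := H2 γ hγD hγZ'
            exact ⟨hc, fun ρ hρ => hnc ρ (hD' ▸ hρ).1⟩
      · -- Case 3a: skip (τ small and σ obstructed in Z).
        refine ⟨Z, Relation.ReflTransGen.refl, ?_, ?_⟩
        · intro ρ hρ hcard
          rw [hD']
          refine ⟨H1 ρ hρ hcard, ?_⟩
          rintro (rfl | rfl)
          · omega
          · omega
        · intro γ hγ hγZ
          rw [hD'] at hγ
          obtain ⟨hc, hnc⟩ := H2 γ hγ.1 hγZ
          exact ⟨hc, fun ρ hρ => hnc ρ (hD' ▸ hρ).1⟩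
  · -- Case 3b: skip (τ already missing from Z).
    obtain ⟨hτc, _⟩ := H2 τ hτD hτZ
    have hσc : σ.card < d := hτc ▸ Finset.card_lt_card hst
    refine ⟨Z, Relation.ReflTransGen.refl, ?_, ?_⟩
    · intro ρ hρ hcard
      rw [hD']
      refine ⟨H1 ρ hρ hcard, ?_⟩
      rintro (rfl | rfl)
      · omega
      · exact hτZ hρ
    · intro γ hγ hγZ
      rw [hD'] at hγ
      obtain ⟨hc, hnc⟩ := H2 γ hγ.1 hγZ
      exact ⟨hc, fun ρ hρ => hnc ρ (hD' ▸ hρ).1⟩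

theorem rtg2 {d : ℕ} (hd : 1 ≤ d) {D D' : AbsComplex V}
    (h : Relation.ReflTransGen CollapseStep D D') :
    ∀ Z : AbsComplex V, Inv d D Z →
      ∃ Z', Relation.ReflTransGen CollapseStep Z Z' ∧ Inv d D' Z' := by
  induction h with
  | refl => exact fun Z hZ => ⟨Z, Relation.ReflTransGen.refl, hZ⟩
  | tail _ hbc ih =>
    intro Z hZ
    obtain ⟨Z₁, hs, hinv⟩ := ih Z hZ
    obtain ⟨Z₂, hs2, hinv2⟩ := step2 hd hbc hinv
    exact ⟨Z₂, hs.trans hs2, hinv2⟩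

/-! ### Stage 1: the cone construction -/

variable [DecidableEq V]

/-- The deletion together with `{v}` and the cone `v * Y`, for `Y` a subcomplex of the link. -/
def cone (X : AbsComplex V) (v : V) (Y : AbsComplex V)
    (hY : Y.faces ⊆ (link X v).faces) : AbsComplex V where
  faces := {ρ | (ρ ∈ X.faces ∧ v ∉ ρ) ∨ ρ = {v} ∨ (v ∈ ρ ∧ ρ.erase v ∈ Y.faces)}
  nonempty_mem := by
    rintro ρ (⟨h, _⟩ | rfl | ⟨hv, _⟩)
    · exact X.nonempty_mem h
    · exact ⟨v, Finset.mem_singleton_self v⟩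
    · exact ⟨v, hv⟩
  down_closed := by
    rintro a b (⟨haX, hav⟩ | rfl | ⟨hva, herase⟩) hsub hbne
    · exact Or.inl ⟨X.down_closed haX hsub hbne, fun hb => hav (hsub hb)⟩
    · rcases Finset.subset_singleton_iff.mp hsub with rfl | rfl
      · exact absurd hbne (by simp)
      · exact Or.inr (Or.inl rfl)
    · obtain ⟨hne, hvae, hins⟩ := hY herase
      have haX : a ∈ X.faces := by
        rw [← Finset.insert_erase hva]; exact hins
      by_cases hvb : v ∈ b
      · rcases eq_or_ne b {v} with rfl | hbne'
        · exact Or.inr (Or.inl rfl)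
        · refine Or.inr (Or.inr ⟨hvb, Y.down_closed herase
            (fun x hx => Finset.mem_erase.mpr
              ⟨(Finset.mem_erase.mp hx).1, hsub (Finset.mem_erase.mp hx).2⟩) ?_⟩)
          obtain ⟨x, hxb, hxv⟩ : ∃ x ∈ b, x ≠ v := by
            by_contra hcon
            push_neg at hcon
            exact hbne' (Finset.eq_singleton_iff_unique_mem.mpr ⟨hvb, hcon⟩)
          exact ⟨x, Finset.mem_erase.mpr ⟨hxv, hxb⟩⟩
      · exact Or.inl ⟨X.down_closed haX hsub hbne, hvb⟩

theorem singleton_ne_insert {v : V} {σ : Finset V} (hσn : σ.Nonempty) (hvσ : v ∉ σ) :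
    ({v} : Finset V) ≠ insert v σ := by
  intro h
  obtain ⟨x, hx⟩ := hσn
  have hx' : x ∈ ({v} : Finset V) := h ▸ Finset.mem_insert_of_mem hx
  rw [Finset.mem_singleton] at hx'
  exact hvσ (hx' ▸ hx)

theorem step1 {X : AbsComplex V} {v : V} {Y Y' : AbsComplex V}
    (hY : Y.faces ⊆ (link X v).faces) (hY' : Y'.faces ⊆ (link X v).faces)
    (h : CollapseStep Y Y') :
    CollapseStep (cone X v Y hY) (cone X v Y' hY') := by
  obtain ⟨σ, τ, ⟨hσY, hτY, hst, huniq⟩, hfaces⟩ := h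
  have hσn : σ.Nonempty := Y.nonempty_mem hσY
  have hτn : τ.Nonempty := Y.nonempty_mem hτY
  have hvσ : v ∉ σ := (hY hσY).2.1
  have hvτ : v ∉ τ := (hY hτY).2.1
  have heσ : (insert v σ).erase v = σ := Finset.erase_insert hvσ
  have heτ : (insert v τ).erase v = τ := Finset.erase_insert hvτ
  refine ⟨insert v σ, insert v τ, ⟨?_, ?_, ?_, ?_⟩, ?_⟩
  · exact Or.inr (Or.inr ⟨Finset.mem_insert_self v σ, by rw [heσ]; exact hσY⟩)
  · exact Or.inr (Or.inr ⟨Finset.mem_insert_self v τ, by rw [heτ]; exact hτY⟩)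
  · refine lt_of_le_of_ne (Finset.insert_subset_insert v hst.subset) (fun heq => hst.ne ?_)
    rw [← heσ, ← heτ, heq]
  · rintro ρ (⟨hρX, hvρ⟩ | rfl | ⟨hvρ, herase⟩) hssub
    · exact absurd (hssub.subset (Finset.mem_insert_self v σ)) hvρ
    · obtain ⟨x, hx⟩ := hσn
      have hx' : x ∈ ({v} : Finset V) := hssub.subset (Finset.mem_insert_of_mem hx)
      rw [Finset.mem_singleton] at hx'
      exact absurd (hx' ▸ hx) hvσ
    · have hσsub : σ ⊆ ρ.erase v := fun x hx => Finset.mem_erase.mpr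
        ⟨fun hxv => hvσ (hxv ▸ hx), hssub.subset (Finset.mem_insert_of_mem hx)⟩
      have hne : σ ≠ ρ.erase v := fun hc => hssub.ne (by rw [hc, Finset.insert_erase hvρ])
      have hρτ := huniq _ herase (lt_of_le_of_ne hσsub hne)
      rw [← Finset.insert_erase hvρ, hρτ]
  · ext ρ
    simp only [cone, Set.mem_setOf_eq, Set.mem_diff, Set.mem_insert_iff, Set.mem_singleton_iff]
    constructor
    · rintro (⟨hρX, hvρ⟩ | rfl | ⟨hvρ, herase⟩)
      · refine ⟨Or.inl ⟨hρX, hvρ⟩, ?_⟩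
        rintro (rfl | rfl) <;> exact hvρ (Finset.mem_insert_self v _)
      · refine ⟨Or.inr (Or.inl rfl), ?_⟩
        rintro (h | h)
        · exact singleton_ne_insert hσn hvσ h
        · exact singleton_ne_insert hτn hvτ h
      · rw [hfaces] at herase
        obtain ⟨hρY, hρne⟩ := herase
        simp only [Set.mem_insert_iff, Set.mem_singleton_iff] at hρne
        push_neg at hρne
        refine ⟨Or.inr (Or.inr ⟨hvρ, hρY⟩), ?_⟩
        rintro (rfl | rfl)
        · exact hρne.1 heσ
        · exact hρne.2 heτ
    · rintro ⟨(⟨hρX, hvρ⟩ | rfl | ⟨hvρ, herase⟩), hne⟩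
      · exact Or.inl ⟨hρX, hvρ⟩
      · exact Or.inr (Or.inl rfl)
      · refine Or.inr (Or.inr ⟨hvρ, ?_⟩)
        rw [hfaces]
        refine ⟨herase, ?_⟩
        simp only [Set.mem_insert_iff, Set.mem_singleton_iff]
        rintro (hc | hc)
        · exact hne (Or.inl (by rw [← Finset.insert_erase hvρ, hc]))
        · exact hne (Or.inr (by rw [← Finset.insert_erase hvρ, hc]))

theorem rtg1 {X : AbsComplex V} {v : V} {Y Y₂ : AbsComplex V}
    (h : Relation.ReflTransGen CollapseStep Y Y₂) :
    ∀ (hY : Y.faces ⊆ (link X v).faces) (hY₂ : Y₂.faces ⊆ (link X v).faces),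
      Relation.ReflTransGen CollapseStep (cone X v Y hY) (cone X v Y₂ hY₂) := by
  induction h with
  | refl => exact fun hY hY₂ => Relation.ReflTransGen.refl
  | @tail b c hab hbc ih =>
    intro hY hY₂
    have hb : b.faces ⊆ (link X v).faces := (rtg_subset hab).trans hY
    exact (ih hY hb).tail (step1 hb hY₂ hbc)

end Stmt10Aux

/-- if the link of `v` in `X` is `(d−1)`-collapsible and the deletion
`X \ {v}` is `d`-collapsible, then `X` is `d`-collapsible. -/
theorem stmt10 {V : Type*} [DecidableEq V] (d : ℕ) (hd : 1 ≤ d)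
    (X : AbsComplex V) (v : V)
    (hlk : Collapsible (d - 1) (link X v))
    (hdel : Collapsible d (deletion X v)) :
    Collapsible d X := by
  classical
  open Stmt10Aux in
  by_cases hv : {v} ∈ X.faces
  · obtain ⟨L, hLseq, hLcard⟩ := hlk
    have hL : L.faces ⊆ (link X v).faces := rtg_subset hLseq
    have hX : X = cone X v (link X v) subset_rfl := by
      apply absComplex_ext
      ext ρ
      simp only [cone, link, Set.mem_setOf_eq]
      constructor
      · intro hρ
        by_cases hvρ : v ∈ ρ
        · rcases eq_or_ne ρ {v} with rfl | hρv
          · exact Or.inr (Or.inl rfl)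
          · refine Or.inr (Or.inr ⟨hvρ, ⟨?_, Finset.notMem_erase v ρ, ?_⟩⟩)
            · obtain ⟨x, hx, hxv⟩ : ∃ x ∈ ρ, x ≠ v := by
                by_contra hcon
                push_neg at hcon
                exact hρv (Finset.eq_singleton_iff_unique_mem.mpr ⟨hvρ, hcon⟩)
              exact ⟨x, Finset.mem_erase.mpr ⟨hxv, hx⟩⟩
            · rw [Finset.insert_erase hvρ]; exact hρ
        · exact Or.inl ⟨hρ, hvρ⟩
      · rintro (⟨h, _⟩ | rfl | ⟨hvρ, _, _, hins⟩)
        · exact h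
        · exact hv
        · rwa [Finset.insert_erase hvρ] at hins
    have seq1 : Relation.ReflTransGen CollapseStep X (cone X v L hL) :=
      Eq.mpr (congrArg (fun W => Relation.ReflTransGen CollapseStep W (cone X v L hL)) hX)
        (rtg1 hLseq subset_rfl hL)
    have hinv : Inv d (deletion X v) (cone X v L hL) := by
      constructor
      · rintro ρ (⟨hρX, hvρ⟩ | rfl | ⟨hvρ, herase⟩) hcard
        · exact ⟨hρX, hvρ⟩
        · simp only [Finset.card_singleton] at hcard; omega
        · have h1 : (ρ.erase v).card + 1 = ρ.card := Finset.card_erase_add_one hvρ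
          have h2 := hLcard _ herase
          omega
      · intro γ hγ hγZ
        exact absurd (Or.inl ⟨hγ.1, hγ.2⟩) hγZ
    obtain ⟨Dend, hDseq, hDcard⟩ := hdel
    obtain ⟨Z', hZseq, hinv'⟩ := rtg2 hd hDseq _ hinv
    refine ⟨Z', seq1.trans hZseq, ?_⟩
    intro ρ hρ
    by_contra hcon
    push_neg at hcon
    exact absurd (hDcard ρ (hinv'.1 ρ hρ (by omega))) (by omega)
  · have hfaces : (deletion X v).faces = X.faces := by
      ext ρ
      constructor
      · exact fun h => h.1
      · intro h
        refine ⟨h, fun hvρ => hv (X.down_closed h ?_ ⟨v, Finset.mem_singleton_self v⟩)⟩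
        simpa using hvρ
    have heq : deletion X v = X := Stmt10Aux.absComplex_ext hfaces
    rwa [heq] at hdel
end
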